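/- Existence of a regular over-approximation with equal transition behavior: let φ be a DFA with finite state set Q over Σ, and let L ⊆ Σ* be an arbitrary language. Define, for each q ∈ Q, f(q) = {δ*(q, x) | x ∈ L} and l(q) = {x ∈ Σ* | δ*(q, x) ∈ f(q)}, and let L' = ⋂_{q∈Q} l(q). Then (i) each l(q) is a regular language, hence L' is regular; (ii) L ⊆ L'; and (iii) for every q ∈ Q, {δ*(q, x) | x ∈ L'} = f(q). -/

import Mathlib

variable {σ Q : Type*}

/-- Image of the language `L` under the state-transformation starting from `q`. -/
def fimg (δ : Q → σ → Q) (L : Set (List σ)) (q : Q) : Set Q :=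
  (fun x => x.foldl δ q) '' L

/-- `l(q)`: the strings taking `q` into `f(q)`. -/
def lpre (δ : Q → σ → Q) (L : Set (List σ)) (q : Q) : Set (List σ) :=
  {x | x.foldl δ q ∈ fimg δ L q}

/-- `L' = ⋂_q l(q)`. -/
def Lbig (δ : Q → σ → Q) (L : Set (List σ)) : Set (List σ) :=
  ⋂ q : Q, lpre δ L q

/-- Any language recognized by a DFA over an arbitrary fintype state space is regular. -/
lemma isRegular_of_dfa {T : Type*} {S : Type*} [Fintype S] (M : DFA T S) :
    Language.IsRegular M.accepts := by
  classical
  refine ⟨Fin (Fintype.card S), inferInstance, DFA.reindex (Fintype.equivFin S) M, ?_⟩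
  exact DFA.accepts_reindex M _

private lemma foldl_pi (δ : Q → σ → Q) (x : List σ) :
    ∀ (f : Q → Q) (q : Q),
      (x.foldl (fun (g : Q → Q) a => fun p => δ (g p) a) f) q = x.foldl δ (f q) := by
  induction x with
  | nil => intro f q; rfl
  | cons a x ih =>
    intro f q
    simpa using ih (fun p => δ (f p) a) q

theorem regular_overapproximation [Fintype Q] (δ : Q → σ → Q) (L : Set (List σ)) :
    (∀ q : Q, Language.IsRegular (lpre δ L q)) ∧
      Language.IsRegular (Lbig δ L) ∧
      L ⊆ Lbig δ L ∧
      (∀ q : Q, fimg δ (Lbig δ L) q = fimg δ L q) := by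
  classical
  have hsub : L ⊆ Lbig δ L := by
    intro x hx
    refine Set.mem_iInter.2 fun q => ⟨x, hx, rfl⟩
  refine ⟨?_, ?_, hsub, ?_⟩
  · intro q
    have : (DFA.mk δ q (fimg δ L q)).accepts = (lpre δ L q : Language σ) := rfl
    exact this ▸ isRegular_of_dfa _
  · set M : DFA σ (Q → Q) :=
      ⟨fun g a => fun p => δ (g p) a, id, {g | ∀ q : Q, g q ∈ fimg δ L q}⟩ with hM
    have : M.accepts = (Lbig δ L : Language σ) := by
      ext x
      rw [DFA.mem_accepts]
      show (∀ q : Q, _) ↔ _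
      show _ ↔ x ∈ (Lbig δ L : Set (List σ))
      rw [Lbig, Set.mem_iInter]
      constructor
      · intro h q
        have := h q
        rwa [show M.eval x = x.foldl (fun g a p => δ (g p) a) id from rfl,
          foldl_pi δ x id q] at this
      · intro h q
        have := h q
        have hq : M.eval x q = x.foldl δ q := foldl_pi δ x id q
        rw [hq]
        exact this
    exact this ▸ isRegular_of_dfa M
  · intro q
    apply Set.Subset.antisymm
    · rintro _ ⟨x, hx, rfl⟩
      exact Set.mem_iInter.1 hx q
    · exact Set.image_mono hsub
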